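/- Let A : ℝ → End(V) be a solution of the Riccati equation A'(t) = A(t)² (c = 0 case) defined on all of ℝ, with A(0) symmetric with respect to an inner product on the finite-dimensional real vector space V. Then A(t) = 0 for all t. -/

import Mathlib

open Set

/-- A function with `g' ≥ g²` everywhere on `ℝ` never takes positive values. -/
lemma riccati_nonpos (g f : ℝ → ℝ) (hg : ∀ t, HasDerivAt g (f t) t)
    (hf : ∀ t, (g t)^2 ≤ f t) : ∀ t, g t ≤ 0 := by
  by_contra hc
  push_neg at hc
  obtain ⟨t₀, ht₀⟩ := hc
  have hmono : Monotone g := by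
    apply monotone_of_deriv_nonneg (fun t => (hg t).differentiableAt)
    intro t
    rw [(hg t).deriv]
    exact (sq_nonneg _).trans (hf t)
  have hge : ∀ t ∈ Ici t₀, g t₀ ≤ g t := fun t ht => hmono ht
  -- h t = -(g t)⁻¹ - t is monotone on Ici t₀
  set h : ℝ → ℝ := fun t => -(g t)⁻¹ - t with hh
  have hpos : ∀ t ∈ Ici t₀, 0 < g t := fun t ht => lt_of_lt_of_le ht₀ (hge t ht)
  have hderiv : ∀ t ∈ Ici t₀, HasDerivAt h (f t / (g t)^2 - 1) t := by
    intro t ht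
    have h1 : HasDerivAt (fun t => (g t)⁻¹) (-(f t) / (g t)^2) t := (hg t).inv (hpos t ht).ne'
    have := (h1.neg).sub (hasDerivAt_id t)
    exact this.congr_deriv (by ring)
  have hmonoh : MonotoneOn h (Ici t₀) := by
    apply monotoneOn_of_deriv_nonneg (convex_Ici t₀)
      (fun t ht => (hderiv t ht).continuousAt.continuousWithinAt)
      (fun t ht => by
        rw [interior_Ici] at ht
        exact (hderiv t (mem_Ici.mpr (le_of_lt (mem_Ioi.mp ht)))).differentiableAt.differentiableWithinAt)
    intro t ht
    rw [interior_Ici] at ht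
    rw [(hderiv t (mem_Ici.mpr (le_of_lt (mem_Ioi.mp ht)))).deriv]
    have hg2 : 0 < (g t)^2 := pow_pos (hpos t (mem_Ici.mpr (le_of_lt (mem_Ioi.mp ht)))) 2
    have : (1:ℝ) ≤ f t / (g t)^2 := (one_le_div hg2).mpr (hf t)
    linarith
  set T : ℝ := t₀ + (g t₀)⁻¹ + 1 with hT
  have hTmem : T ∈ Ici t₀ := by
    have : 0 < (g t₀)⁻¹ := inv_pos.mpr ht₀
    simp only [mem_Ici, hT]; linarith
  have := hmonoh (self_mem_Ici) hTmem (by simpa using hTmem)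
  have hgT : 0 < g T := hpos T hTmem
  have h1 : -(g T)⁻¹ < 0 := neg_neg_iff_pos.mpr (inv_pos.mpr hgT)
  simp only [hh, hT] at this
  have h2 : 0 < (g t₀)⁻¹ := inv_pos.mpr ht₀
  nlinarith [this]

lemma riccati_zero (g f : ℝ → ℝ) (hg : ∀ t, HasDerivAt g (f t) t)
    (hf : ∀ t, (g t)^2 ≤ f t) : ∀ t, g t = 0 := by
  have h1 := riccati_nonpos g f hg hf
  have h2 := riccati_nonpos (fun t => -g (-t)) (fun t => f (-t))
    (fun t => by
      have := ((hg (-t)).comp t (hasDerivAt_neg t)).neg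
      exact this.congr_deriv (by ring))
    (fun t => by simpa using hf (-t))
  intro t
  have := h2 (-t)
  simp at this
  exact le_antisymm (h1 t) this


theorem selfadj_all {V : Type*} [NormedAddCommGroup V] [InnerProductSpace ℝ V]
    [FiniteDimensional ℝ V]
    (A : ℝ → (V →L[ℝ] V))
    (hA : ∀ t : ℝ, HasDerivAt A (A t * A t) t)
    (hsym : LinearMap.IsSymmetric ((A 0 : V →L[ℝ] V) : V →ₗ[ℝ] V)) :
    ∀ t : ℝ, IsSelfAdjoint (A t) := by
  have hcV : CompleteSpace V := FiniteDimensional.complete ℝ V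
  set B : ℝ → (V →L[ℝ] V) := fun t => star (A t) with hBdef
  have hB : ∀ t, HasDerivAt B (B t * B t) t := by
    intro t
    have := (hA t).star
    simpa [star_mul, hBdef] using this
  set D : ℝ → (V →L[ℝ] V) := fun t => A t - B t with hDdef
  have hD0 : D 0 = 0 := by
    have h0 : IsSelfAdjoint (A 0) := ContinuousLinearMap.isSelfAdjoint_iff_isSymmetric.mpr hsym
    simp [hDdef, hBdef, h0.star_eq]
  have hAdiff : Differentiable ℝ A := fun t => (hA t).differentiableAt
  have hAcont : Continuous A := hAdiff.continuous
  intro t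
  suffices hDt : D t = 0 by
    have : A t - star (A t) = 0 := hDt
    have := sub_eq_zero.mp this
    exact this.symm
  set T : ℝ := |t| + 1 with hTdef
  have hT : 0 < T := by positivity
  have hmem : t ∈ Icc (-T) T :=
    ⟨by simp only [hTdef]; linarith [neg_abs_le t], by simp only [hTdef]; linarith [le_abs_self t]⟩
  set σ : ℝ → ℝ := fun s => max (-T) (min T s) with hσdef
  have hσmem : ∀ s, σ s ∈ Icc (-T) T := by
    intro s
    refine ⟨le_max_left _ _, max_le (by linarith) (min_le_left _ _)⟩
  have hσeq : ∀ s ∈ Ioo (-T) T, σ s = s := by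
    intro s hs
    simp only [hσdef]
    rw [min_eq_right hs.2.le, max_eq_right hs.1.le]
  obtain ⟨C, hC⟩ := isCompact_Icc.exists_bound_of_continuousOn
    (hAcont.continuousOn : ContinuousOn A (Icc (-T) T))
  set K : NNReal := 2 * ⟨max C 0, le_max_right _ _⟩ with hKdef
  have hKval : (K : ℝ) = 2 * max C 0 := rfl
  set v : ℝ → (V →L[ℝ] V) → (V →L[ℝ] V) := fun s X => A (σ s) * X + X * B (σ s) with hvdef
  have hv : ∀ s, LipschitzOnWith K (v s) univ := by
    intro s
    apply LipschitzWith.lipschitzOnWith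
    apply LipschitzWith.of_dist_le_mul
    intro X Y
    rw [dist_eq_norm, dist_eq_norm]
    have heq : v s X - v s Y = A (σ s) * (X - Y) + (X - Y) * B (σ s) := by
      simp only [hvdef]; noncomm_ring
    have hnA : ‖A (σ s)‖ ≤ max C 0 := le_trans (hC _ (hσmem s)) (le_max_left _ _)
    have hnB : ‖B (σ s)‖ ≤ max C 0 := by
      show ‖star (A (σ s))‖ ≤ max C 0
      rw [ContinuousLinearMap.star_eq_adjoint, ContinuousLinearMap.adjoint.norm_map]
      exact hnA
    calc ‖v s X - v s Y‖ = ‖A (σ s) * (X - Y) + (X - Y) * B (σ s)‖ := by rw [heq]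
      _ ≤ ‖A (σ s) * (X - Y)‖ + ‖(X - Y) * B (σ s)‖ := norm_add_le _ _
      _ ≤ ‖A (σ s)‖ * ‖X - Y‖ + ‖X - Y‖ * ‖B (σ s)‖ :=
          add_le_add (norm_mul_le _ _) (norm_mul_le _ _)
      _ ≤ (K : ℝ) * ‖X - Y‖ := by
          rw [hKval]
          nlinarith [norm_nonneg (X - Y)]
  have hDderiv : ∀ s, HasDerivAt D (A s * A s - B s * B s) s := fun s => (hA s).sub (hB s)
  have key : EqOn D (fun _ => (0 : V →L[ℝ] V)) (Icc (-T) T) := by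
    apply ODE_solution_unique_of_mem_Icc (fun s _ => hv s) (t₀ := 0) ⟨by linarith, hT⟩
    · exact fun s _ => (hDderiv s).continuousAt.continuousWithinAt
    · intro s hs
      have := hDderiv s
      have hveq : v s (D s) = A s * A s - B s * B s := by
        simp only [hvdef, hDdef, hσeq s hs]
        noncomm_ring
      rw [hveq]
      exact this
    · exact fun s _ => mem_univ _
    · exact continuousOn_const
    · intro s hs
      have hveq : v s 0 = 0 := by simp [hvdef]
      rw [hveq]
      exact hasDerivAt_const s 0
    · exact fun s _ => mem_univ _
    · exact hD0
  exact key hmem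

/-- a globally defined solution `A : ℝ → End(V)` of the Riccati
equation `A' = A²` with `A(0)` symmetric vanishes identically. -/
theorem stmt_18 {V : Type*} [NormedAddCommGroup V] [InnerProductSpace ℝ V]
    [FiniteDimensional ℝ V]
    (A : ℝ → (V →L[ℝ] V))
    (hA : ∀ t : ℝ, HasDerivAt A (A t * A t) t)
    (hsym : LinearMap.IsSymmetric ((A 0 : V →L[ℝ] V) : V →ₗ[ℝ] V)) :
    ∀ t : ℝ, A t = 0 := by
  haveI : CompleteSpace V := FiniteDimensional.complete ℝ V
  have hsa := selfadj_all A hA hsym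
  have hsaSym : ∀ s : ℝ, LinearMap.IsSymmetric ((A s : V →L[ℝ] V) : V →ₗ[ℝ] V) :=
    fun s => ContinuousLinearMap.isSelfAdjoint_iff_isSymmetric.mp (hsa s)
  intro t
  have hq : ∀ x : V, inner ℝ (A t x) x = (0 : ℝ) := by
    intro x
    rcases eq_or_ne x 0 with rfl | hx
    · simp
    set u : V := ‖x‖⁻¹ • x with hu_def
    have hu : ‖u‖ = 1 := norm_smul_inv_norm hx
    have hg : ∀ s : ℝ, HasDerivAt (fun s => (inner ℝ (A s u) u : ℝ))
        (inner ℝ ((A s * A s) u) u) s := by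
      intro s
      have h1 : HasDerivAt (fun s => A s u) ((A s * A s) u) s := by
        simpa using (hA s).clm_apply (hasDerivAt_const s u)
      have := HasDerivAt.inner ℝ h1 (hasDerivAt_const s u)
      simpa using this
    have hf : ∀ s : ℝ, ((inner ℝ (A s u) u : ℝ))^2 ≤ (inner ℝ ((A s * A s) u) u : ℝ) := by
      intro s
      have hsymm : (inner ℝ ((A s) ((A s) u)) u : ℝ) = inner ℝ ((A s) u) ((A s) u) :=
        hsaSym s ((A s) u) u
      have hcs := real_inner_mul_inner_self_le ((A s) u) u
      have huu : (inner ℝ u u : ℝ) = 1 := by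
        rw [real_inner_self_eq_norm_sq, hu]; norm_num
      have : (inner ℝ ((A s * A s) u) u : ℝ) = inner ℝ ((A s) u) ((A s) u) := by
        simpa [ContinuousLinearMap.mul_apply] using hsymm
      rw [this]
      calc ((inner ℝ (A s u) u : ℝ))^2 = (inner ℝ (A s u) u : ℝ) * (inner ℝ (A s u) u : ℝ) := sq _
        _ ≤ (inner ℝ ((A s) u) ((A s) u) : ℝ) * (inner ℝ u u : ℝ) := hcs
        _ = inner ℝ ((A s) u) ((A s) u) := by rw [huu, mul_one]
    have hzero := riccati_zero _ _ hg hf t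
    have hx2 : (inner ℝ (A t x) x : ℝ) = ‖x‖^2 * (inner ℝ (A t u) u : ℝ) := by
      have hxu : x = ‖x‖ • u := by
        rw [hu_def, smul_smul]
        rw [mul_inv_cancel₀ (norm_ne_zero_iff.mpr hx), one_smul]
      calc (inner ℝ (A t x) x : ℝ) = inner ℝ (A t (‖x‖ • u)) (‖x‖ • u) := by rw [← hxu]
        _ = ‖x‖ * (‖x‖ * inner ℝ (A t u) u) := by
            rw [map_smul, real_inner_smul_left, real_inner_smul_right]
        _ = ‖x‖^2 * (inner ℝ (A t u) u : ℝ) := by ring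
    rw [hx2, hzero, mul_zero]
  have : ((A t : V →L[ℝ] V) : V →ₗ[ℝ] V) = 0 := (hsaSym t).inner_map_self_eq_zero.mp hq
  ext x
  have := LinearMap.congr_fun this x
  simpa using this
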